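/- Let n ≥ 2, k ≥ 2, and G = (ℤ/nℤ) wr ℤ^k with generating set {a, b_1, …, b_k}, where a generates the passive copy of ℤ/nℤ (supported at the identity of ℤ^k) and b_1, …, b_k are the standard generators of the active group ℤ^k. Let w = [⋯[[a, b_1], b_2], ⋯, b_{k−1}] and H = ⟨w, b_1, …, b_k⟩. Then Δ_H^G(l) ⪰ l^k; in particular, G has a finitely generated subgroup whose distortion is at least l^k. -/

import Mathlib

open scoped Pointwise
open scoped commutatorElement

namespace DistortionPaper

section Defs

variable (A B : Type*) [Group A] [Group B]

/-- The base group of the restricted wreath product: finitely supported functions `B → A`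
under pointwise multiplication, as a subgroup of `B → A`. -/
def WreathBase : Subgroup (B → A) where
  carrier := {f | (Function.mulSupport f).Finite}
  one_mem' := by
    simp [Function.mulSupport_one]
  mul_mem' := by
    intro f g hf hg
    exact ((Set.Finite.union hf hg).subset (Function.mulSupport_mul f g))
  inv_mem' := by
    intro f hf
    simpa [Function.mulSupport_inv] using hf

/-- The shift automorphism of the base group: `(g ∘ f)(x) = f(x * g)`. -/
def wreathShift (g : B) : WreathBase A B ≃* WreathBase A B where
  toFun f := ⟨fun x => (f : B → A) (x * g), by
    have h : Function.mulSupport (fun x => (f : B → A) (x * g))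
        ⊆ (fun x : B => x * g) ⁻¹' Function.mulSupport (f : B → A) := fun x hx => hx
    exact (Set.Finite.preimage (Set.injOn_of_injective (mul_left_injective g)) f.2).subset h⟩
  invFun f := ⟨fun x => (f : B → A) (x * g⁻¹), by
    have h : Function.mulSupport (fun x => (f : B → A) (x * g⁻¹))
        ⊆ (fun x : B => x * g⁻¹) ⁻¹' Function.mulSupport (f : B → A) := fun x hx => hx
    exact (Set.Finite.preimage (Set.injOn_of_injective (mul_left_injective g⁻¹)) f.2).subset h⟩
  left_inv f := Subtype.ext <| funext fun x => by simp [mul_assoc]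
  right_inv f := Subtype.ext <| funext fun x => by simp [mul_assoc]
  map_mul' f₁ f₂ := Subtype.ext <| funext fun _ => rfl

/-- The action of `B` on the base group by shifts. -/
def wreathAction : B →* MulAut (WreathBase A B) where
  toFun g := wreathShift A B g
  map_one' := by
    refine MulEquiv.ext fun f => Subtype.ext <| funext fun x => ?_
    show (f : B → A) (x * 1) = (f : B → A) x
    rw [mul_one]
  map_mul' g₁ g₂ := by
    refine MulEquiv.ext fun f => Subtype.ext <| funext fun x => ?_
    show (f : B → A) (x * (g₁ * g₂)) = (f : B → A) (x * g₁ * g₂)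
    rw [mul_assoc]

/-- The restricted wreath product `A wr B`. -/
abbrev WreathProduct := WreathBase A B ⋊[wreathAction A B] B

/-- The element of the base group supported at `1 ∈ B` with value `a`. -/
noncomputable def toBase (a : A) : WreathBase A B := by
  classical
  exact ⟨fun x => if x = (1 : B) then a else 1, by
    apply Set.Finite.subset (Set.finite_singleton (1 : B))
    intro x hx
    simp only [Function.mem_mulSupport] at hx
    simp only [Set.mem_singleton_iff]
    by_contra hne
    rw [if_neg hne] at hx
    exact hx rfl⟩

/-- The canonical copy of `A` in `A wr B` (functions supported at `1`). -/
noncomputable def ofPassive (a : A) : WreathProduct A B :=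
  SemidirectProduct.inl (toBase A B a)

/-- The canonical copy of `B` in `A wr B`. -/
def ofActive (g : B) : WreathProduct A B := SemidirectProduct.inr g

/-- The generating set `S ∪ T` of `A wr B` obtained from generating sets `S` of `A`
and `T` of `B`. -/
def wreathGen (S : Set A) (T : Set B) : Set (WreathProduct A B) :=
  (fun a => ofPassive A B a) '' S ∪ (fun g => ofActive A B g) '' T

end Defs

/-- Word length of `g` with respect to the set `T`: the least `n` such that `g` is a
product of `n` elements of `T ∪ T⁻¹` (and `0` if no such `n` exists). -/
noncomputable def wordLength {G : Type*} [Group G] (T : Set G) (g : G) : ℕ :=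
  sInf {n | ∃ f : Fin n → G, (∀ i, f i ∈ T ∪ T⁻¹) ∧ (List.ofFn f).prod = g}

/-- The distortion function of a subgroup `H` of `G`, where `T` is a generating set of `G`
and `S` a generating set of `H`. -/
noncomputable def distortion {G : Type*} [Group G] (T : Set G) (H : Subgroup G)
    (S : Set H) (l : ℕ) : ℕ :=
  sSup (wordLength S '' {h : H | wordLength T (h : G) ≤ l})

/-- `f ⪯ g` : there is `C > 0` with `f l ≤ C * g (C * l)` for all `l`. -/
def Dominates (f g : ℕ → ℕ) : Prop := ∃ C : ℕ, 0 < C ∧ ∀ l, f l ≤ C * g (C * l)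

/-- `f ≈ g` : `f ⪯ g` and `g ⪯ f`. -/
def DistEquiv (f g : ℕ → ℕ) : Prop := Dominates f g ∧ Dominates g f

/-- A subgroup is subnormal if there is a finite chain from it to the whole group,
each term normal in the next. -/
def IsSubnormal {G : Type*} [Group G] (H : Subgroup G) : Prop :=
  ∃ (n : ℕ) (c : ℕ → Subgroup G), c 0 = H ∧ c n = ⊤ ∧
    ∀ i < n, c i ≤ c (i + 1) ∧ ∀ x ∈ c (i + 1), ∀ h ∈ c i, x * h * x⁻¹ ∈ c i

/-- `ℤ` as a multiplicative group. -/
abbrev Mℤ := Multiplicative ℤ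

/-- The wreath product `ℤ wr ℤ`. -/
abbrev ZwrZ := WreathProduct Mℤ Mℤ

/-- The standard generator `a` of `ℤ wr ℤ` (passive copy, supported at `1`). -/
noncomputable def aZ : ZwrZ := ofPassive Mℤ Mℤ (Multiplicative.ofAdd 1)

/-- The standard generator `b` of `ℤ wr ℤ` (active copy). -/
def bZ : ZwrZ := ofActive Mℤ Mℤ (Multiplicative.ofAdd 1)


/-- The wreath product `(ℤ/nℤ) wr ℤ^k`. -/
abbrev ZnWrZk (n k : ℕ) :=
  WreathProduct (Multiplicative (ZMod n)) (Multiplicative (Fin k → ℤ))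

/-- The generator `a` of the passive group `ℤ/nℤ`. -/
noncomputable def a5 (n k : ℕ) : ZnWrZk n k :=
  ofPassive _ _ (Multiplicative.ofAdd (1 : ZMod n))

/-- The standard generators `b_1, …, b_k` of the active group `ℤ^k` (0-indexed:
`b5 n k i = b_{i+1}`). -/
def b5 (n k : ℕ) (i : Fin k) : ZnWrZk n k :=
  ofActive _ _ (Multiplicative.ofAdd (Pi.single i 1))

/-- `b5' n k j = b_{j+1}` for `j < k`, and `1` otherwise. -/
noncomputable def b5' (n k : ℕ) (j : ℕ) : ZnWrZk n k :=
  if h : j < k then b5 n k ⟨j, h⟩ else 1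

/-- Iterated commutators: `w5 n k 0 = a`, `w5 n k (j+1) = [w5 n k j, b_{j+1}]`,
so `w5 n k (k-1) = [⋯[[a,b_1],b_2],⋯,b_{k-1}]`. -/
noncomputable def w5 (n k : ℕ) : ℕ → ZnWrZk n k
  | 0 => a5 n k
  | j + 1 => ⁅w5 n k j, b5' n k j⁆

/-! ### Machinery for Statement 5 -/

section S5
open SemidirectProduct Multiplicative

variable {n k : ℕ}

/-- The base function of an element of the wreath product, additively. -/
noncomputable def bf (h : ZnWrZk n k) : (Fin k → ℤ) → ZMod n :=
  fun x => Multiplicative.toAdd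
    ((h.left : Multiplicative (Fin k → ℤ) → Multiplicative (ZMod n)) (Multiplicative.ofAdd x))

/-- The active ("cursor") part of an element of the wreath product, additively. -/
def rt (h : ZnWrZk n k) : Fin k → ℤ := Multiplicative.toAdd h.right

lemma rt_mul (g h : ZnWrZk n k) : rt (g * h) = rt g + rt h := rfl

lemma rt_one : rt (1 : ZnWrZk n k) = 0 := rfl

lemma rt_inv (g : ZnWrZk n k) : rt g⁻¹ = - rt g := rfl

lemma rt_inr (t : Multiplicative (Fin k → ℤ)) :
    rt (inr t : ZnWrZk n k) = Multiplicative.toAdd t := rfl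

lemma rt_inl (f : WreathBase (Multiplicative (ZMod n)) (Multiplicative (Fin k → ℤ))) :
    rt (inl f : ZnWrZk n k) = 0 := rfl

lemma bf_mul (g h : ZnWrZk n k) : bf (g * h) = fun x => bf g x + bf h (x + rt g) := rfl

lemma bf_one : bf (1 : ZnWrZk n k) = 0 := rfl

lemma bf_inv (g : ZnWrZk n k) : bf g⁻¹ = fun x => - bf g (x + (- rt g)) := rfl

lemma bf_inr (t : Multiplicative (Fin k → ℤ)) : bf (inr t : ZnWrZk n k) = 0 := rfl

lemma bf_a5 : bf (a5 n k) = fun x => if x = 0 then (1 : ZMod n) else 0 := by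
  funext x
  simp only [bf, a5, ofPassive, SemidirectProduct.left_inl, toBase]
  by_cases h : x = 0
  · subst h
    rw [if_pos (show Multiplicative.ofAdd (0 : Fin k → ℤ) = 1 from rfl), if_pos rfl]
    rfl
  · rw [if_neg (by simpa using h), if_neg h]
    rfl


/-! ### Difference operators on functions `(Fin k → ℤ) → ZMod n` -/

/-- Shift operator. -/
def sh (v : Fin k → ℤ) (u : (Fin k → ℤ) → ZMod n) : (Fin k → ℤ) → ZMod n := fun x => u (x + v)

/-- Difference operator. -/
def dOp (v : Fin k → ℤ) (u : (Fin k → ℤ) → ZMod n) : (Fin k → ℤ) → ZMod n := u - sh v u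

/-- Iterated difference operator. -/
def dList (L : List (Fin k → ℤ)) (u : (Fin k → ℤ) → ZMod n) : (Fin k → ℤ) → ZMod n :=
  L.foldr dOp u

lemma sh_apply (v : Fin k → ℤ) (u : (Fin k → ℤ) → ZMod n) (x : Fin k → ℤ) :
    sh v u x = u (x + v) := rfl

lemma dOp_apply (v : Fin k → ℤ) (u : (Fin k → ℤ) → ZMod n) (x : Fin k → ℤ) :
    dOp v u x = u x - u (x + v) := rfl

lemma sh_add (v : Fin k → ℤ) (u₁ u₂ : (Fin k → ℤ) → ZMod n) :
    sh v (u₁ + u₂) = sh v u₁ + sh v u₂ := rfl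

lemma sh_sh (v w : Fin k → ℤ) (u : (Fin k → ℤ) → ZMod n) :
    sh v (sh w u) = sh w (sh v u) := by
  funext x; simp only [sh_apply, add_right_comm]

lemma dOp_add (v : Fin k → ℤ) (u₁ u₂ : (Fin k → ℤ) → ZMod n) :
    dOp v (u₁ + u₂) = dOp v u₁ + dOp v u₂ := by
  funext x; simp only [dOp_apply, Pi.add_apply]; ring

lemma dOp_neg (v : Fin k → ℤ) (u : (Fin k → ℤ) → ZMod n) :
    dOp v (-u) = - dOp v u := by
  funext x; simp only [dOp_apply, Pi.neg_apply]; ring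

lemma dOp_zero (v : Fin k → ℤ) : dOp v (0 : (Fin k → ℤ) → ZMod n) = 0 := by
  funext x; simp [dOp_apply]

lemma dOp_sub (v : Fin k → ℤ) (u₁ u₂ : (Fin k → ℤ) → ZMod n) :
    dOp v (u₁ - u₂) = dOp v u₁ - dOp v u₂ := by
  funext x; simp only [dOp_apply, Pi.sub_apply]; ring

lemma dOp_sh (v w : Fin k → ℤ) (u : (Fin k → ℤ) → ZMod n) :
    dOp v (sh w u) = sh w (dOp v u) := by
  funext x; simp only [dOp_apply, sh_apply, add_right_comm]

lemma dOp_dOp (v w : Fin k → ℤ) (u : (Fin k → ℤ) → ZMod n) :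
    dOp v (dOp w u) = dOp w (dOp v u) := by
  funext x; simp only [dOp_apply, sh_apply, add_right_comm]; ring

lemma dList_nil (u : (Fin k → ℤ) → ZMod n) : dList [] u = u := rfl

lemma dList_cons (v : Fin k → ℤ) (L : List (Fin k → ℤ)) (u : (Fin k → ℤ) → ZMod n) :
    dList (v :: L) u = dOp v (dList L u) := rfl

lemma dList_add (L : List (Fin k → ℤ)) (u₁ u₂ : (Fin k → ℤ) → ZMod n) :
    dList L (u₁ + u₂) = dList L u₁ + dList L u₂ := by
  induction L with
  | nil => rfl
  | cons v L ih => simp [dList_cons, ih, dOp_add]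

lemma dList_neg (L : List (Fin k → ℤ)) (u : (Fin k → ℤ) → ZMod n) :
    dList L (-u) = - dList L u := by
  induction L with
  | nil => rfl
  | cons v L ih => simp [dList_cons, ih, dOp_neg]

lemma dList_zero (L : List (Fin k → ℤ)) : dList L (0 : (Fin k → ℤ) → ZMod n) = 0 := by
  induction L with
  | nil => rfl
  | cons v L ih => simp [dList_cons, ih, dOp_zero]

lemma dList_sub (L : List (Fin k → ℤ)) (u₁ u₂ : (Fin k → ℤ) → ZMod n) :
    dList L (u₁ - u₂) = dList L u₁ - dList L u₂ := by
  induction L with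
  | nil => rfl
  | cons v L ih => simp [dList_cons, ih, dOp_sub]

lemma dList_sh (L : List (Fin k → ℤ)) (w : Fin k → ℤ) (u : (Fin k → ℤ) → ZMod n) :
    dList L (sh w u) = sh w (dList L u) := by
  induction L with
  | nil => rfl
  | cons v L ih => simp [dList_cons, ih, dOp_sh]

lemma dList_dOp (L : List (Fin k → ℤ)) (w : Fin k → ℤ) (u : (Fin k → ℤ) → ZMod n) :
    dList L (dOp w u) = dOp w (dList L u) := by
  induction L with
  | nil => rfl
  | cons v L ih => simp [dList_cons, ih, dOp_dOp]

/-- Telescoping: a difference with step `m • v` is a unit-step difference of a sum of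
shifts. -/
lemma dOp_nsmul (v : Fin k → ℤ) (m : ℕ) (u : (Fin k → ℤ) → ZMod n) :
    dOp (m • v) u = dOp v (∑ j ∈ Finset.range m, sh (j • v) u) := by
  funext x
  have : ∀ j : ℕ, x + j • v + v = x + (j + 1) • v := by
    intro j; rw [succ_nsmul, add_assoc]
  calc dOp (m • v) u x = u (x + 0 • v) - u (x + m • v) := by
        simp [dOp_apply]
    _ = ∑ j ∈ Finset.range m, (u (x + j • v) - u (x + (j + 1) • v)) := by
        rw [Finset.sum_range_sub' (fun j => u (x + j • v))]
    _ = dOp v (∑ j ∈ Finset.range m, sh (j • v) u) x := by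
        simp only [dOp_apply, Finset.sum_apply, sh_apply, Finset.sum_sub_distrib]
        congr 1
        refine Finset.sum_congr rfl fun j _ => ?_
        rw [succ_nsmul, ← add_assoc, add_right_comm]

/-- Finite support is preserved by shifts. -/
lemma supp_sh (v : Fin k → ℤ) {u : (Fin k → ℤ) → ZMod n}
    (hu : (Function.support u).Finite) : (Function.support (sh v u)).Finite := by
  have h : Function.support (sh v u) ⊆ (fun x : Fin k → ℤ => x + v) ⁻¹' Function.support u :=
    fun x hx => hx
  exact (hu.preimage (Set.injOn_of_injective (add_left_injective v))).subset h

/-- Finite support is preserved by differences. -/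
lemma supp_dOp (v : Fin k → ℤ) {u : (Fin k → ℤ) → ZMod n}
    (hu : (Function.support u).Finite) : (Function.support (dOp v u)).Finite := by
  have h : Function.support (dOp v u) ⊆ Function.support u ∪ Function.support (sh v u) := by
    intro x hx
    by_contra hc
    simp only [Set.mem_union, Function.mem_support, not_or, not_not] at hc
    exact hx (by simp [dOp_apply, ← sh_apply, hc.1, hc.2])
  exact ((hu.union (supp_sh v hu)).subset h)

lemma supp_dList (L : List (Fin k → ℤ)) {u : (Fin k → ℤ) → ZMod n}
    (hu : (Function.support u).Finite) : (Function.support (dList L u)).Finite := by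
  induction L with
  | nil => exact hu
  | cons v L ih => exact supp_dOp v ih

/-- A finitely supported function killed by a nonzero-step difference operator is zero. -/
lemma dOp_eq_zero {v : Fin k → ℤ} (hv : v ≠ 0) {u : (Fin k → ℤ) → ZMod n}
    (hu : (Function.support u).Finite) (h : dOp v u = 0) : u = 0 := by
  by_contra hc
  obtain ⟨x, hx⟩ : ∃ x, u x ≠ 0 := by
    by_contra hall
    push_neg at hall
    exact hc (funext hall)
  have step : ∀ y, u y = u (y + v) := by
    intro y
    have := congrFun h y
    simp only [dOp_apply, Pi.zero_apply, sub_eq_zero] at this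
    exact this
  have key : ∀ m : ℕ, u (x + m • v) = u x := by
    intro m
    induction m with
    | zero => simp
    | succ m ih => rw [succ_nsmul, ← add_assoc, ← step, ih]
  obtain ⟨i, hi⟩ : ∃ i, v i ≠ 0 := by
    by_contra hall
    push_neg at hall
    exact hv (funext hall)
  have hinj : Function.Injective (fun m : ℕ => x + m • v) := by
    intro m m' hmm'
    have h2 : (m : ℤ) * v i = (m' : ℤ) * v i := by
      have h3 := congrFun hmm' i
      simp only [Pi.add_apply, Pi.smul_apply, add_right_inj] at h3
      simpa [nsmul_eq_mul] using h3
    exact Int.natCast_inj.mp (mul_right_cancel₀ hi h2)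
  have hmem : ∀ m : ℕ, (fun m : ℕ => x + m • v) m ∈ Function.support u := by
    intro m
    simp only [Function.mem_support, key]
    exact hx
  exact (Set.infinite_of_injective_forall_mem hinj hmem) hu

/-- Injectivity of `dList` on finitely supported functions. -/
lemma dList_inj {L : List (Fin k → ℤ)} (hL : ∀ v ∈ L, v ≠ 0)
    {u₁ u₂ : (Fin k → ℤ) → ZMod n} (h₁ : (Function.support u₁).Finite)
    (h₂ : (Function.support u₂).Finite) (h : dList L u₁ = dList L u₂) : u₁ = u₂ := by
  induction L with
  | nil => exact h
  | cons v L ih =>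
    refine ih (fun w hw => hL w (List.mem_cons_of_mem v hw)) ?_
    have hv : v ≠ 0 := hL v List.mem_cons_self
    have hfin : (Function.support (dList L u₁ - dList L u₂)).Finite := by
      have hsub : Function.support (dList L u₁ - dList L u₂) ⊆
          Function.support (dList L u₁) ∪ Function.support (dList L u₂) :=
        Function.support_sub _ _
      exact ((supp_dList L h₁).union (supp_dList L h₂)).subset hsub
    have h0 : dOp v (dList L u₁ - dList L u₂) = 0 := by
      rw [dOp_sub, ← dList_cons, ← dList_cons, h, sub_self]
    have := dOp_eq_zero hv hfin h0
    exact sub_eq_zero.mp this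

/-- The `j`-th standard basis vector of `ℤ^k` (or `0` if `j ≥ k`). -/
def eVec (k j : ℕ) : Fin k → ℤ := if h : j < k then Pi.single ⟨j, h⟩ 1 else 0

/-- The list `[e_{j-1}, …, e_1, e_0]`. -/
def esL (k : ℕ) : ℕ → List (Fin k → ℤ)
  | 0 => []
  | j + 1 => eVec k j :: esL k j

/-! ### Group computations in the wreath product -/

lemma rt_commutator (g h : ZnWrZk n k) : rt ⁅g, h⁆ = 0 := by
  simp only [commutatorElement_def, rt_mul, rt_inv]
  abel

lemma bf_commutator_inr (g : ZnWrZk n k) (t : Multiplicative (Fin k → ℤ)) (hg : rt g = 0) :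
    bf ⁅g, SemidirectProduct.inr t⁆ = dOp (Multiplicative.toAdd t) (bf g) := by
  funext x
  simp only [commutatorElement_def, bf_mul, bf_inv, bf_inr, rt_mul, rt_inv, rt_inr, hg,
    dOp_apply, Pi.zero_apply]
  ring_nf

lemma bf_conj_inr (t : Multiplicative (Fin k → ℤ)) (g : ZnWrZk n k) :
    bf (SemidirectProduct.inr t * g * (SemidirectProduct.inr t)⁻¹) =
      sh (Multiplicative.toAdd t) (bf g) := by
  funext x
  simp only [bf_mul, bf_inv, bf_inr, rt_mul, rt_inv, rt_inr, sh_apply, Pi.zero_apply]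
  ring_nf

lemma rt_conj (h g : ZnWrZk n k) : rt (h * g * h⁻¹) = rt g := by
  simp only [rt_mul, rt_inv]; abel

lemma rt_pow (g : ZnWrZk n k) (m : ℕ) : rt (g ^ m) = m • rt g := by
  induction m with
  | zero => simp [rt_one]
  | succ m ih => rw [pow_succ, rt_mul, ih, succ_nsmul]

lemma b5'_eq_inr (j : ℕ) : b5' n k j = SemidirectProduct.inr (Multiplicative.ofAdd (eVec k j)) := by
  unfold b5' eVec
  split
  · rfl
  · rfl

lemma b5'_pow (j m : ℕ) :
    (b5' n k j) ^ m = SemidirectProduct.inr (Multiplicative.ofAdd (m • eVec k j)) := by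
  rw [b5'_eq_inr, ← map_pow, ← ofAdd_nsmul]

lemma eVec_ne_zero {j : ℕ} (hj : j < k) : eVec k j ≠ 0 := by
  unfold eVec
  rw [dif_pos hj]
  intro h
  have := congrFun h ⟨j, hj⟩
  simp at this

/-- The delta function at `0` with value `1`. -/
noncomputable def delta0 (n k : ℕ) : (Fin k → ℤ) → ZMod n := fun x => if x = 0 then 1 else 0

lemma rt_w5 (j : ℕ) : rt (w5 n k j) = 0 := by
  cases j with
  | zero => rfl
  | succ j => exact rt_commutator _ _

lemma bf_w5 (j : ℕ) : bf (w5 n k j) = dList (esL k j) (delta0 n k) := by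
  induction j with
  | zero => exact bf_a5
  | succ j ih =>
    show bf ⁅w5 n k j, b5' n k j⁆ = _
    rw [b5'_eq_inr, bf_commutator_inr _ _ (rt_w5 j), ih]
    rfl

/-! ### The box indicator functions and the main computations -/

open scoped Classical in
/-- Indicator of a partial box: coordinates `i < j` and `i = k-1` range over `(-l, 0]`,
other coordinates are `0`. -/
noncomputable def Cfun (n k l j : ℕ) : (Fin k → ℤ) → ZMod n :=
  fun x => if (∀ i : Fin k, if ((i : ℕ) < j ∨ (i : ℕ) = k - 1)
    then (-(l : ℤ) < x i ∧ x i ≤ 0) else x i = 0) then 1 else 0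

lemma indicator_congr {P Q : Prop} [Decidable P] [Decidable Q] (h : P ↔ Q) :
    (if P then (1 : ZMod n) else 0) = if Q then 1 else 0 := if_congr h rfl rfl

lemma scalar_step (l : ℕ) (t : ℤ) :
    (if t = 0 then (1 : ZMod n) else 0) - (if t + l = 0 then 1 else 0) =
      (if (-(l : ℤ) < t ∧ t ≤ 0) then 1 else 0) -
        (if (-(l : ℤ) < t + 1 ∧ t + 1 ≤ 0) then 1 else 0) := by
  split_ifs <;> first | omega | norm_num

lemma scalar_base (m : ℕ) (t : ℤ) :
    (if (-(m : ℤ) < t ∧ t ≤ 0) then (1 : ZMod n) else 0) +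
      (if t = -(m : ℤ) then 1 else 0) =
      if (-(((m + 1 : ℕ)) : ℤ) < t ∧ t ≤ 0) then 1 else 0 := by
  split_ifs <;> first | omega | norm_num

lemma eVec_self {j : ℕ} (hj : j < k) : eVec k j ⟨j, hj⟩ = 1 := by
  unfold eVec; rw [dif_pos hj]; simp

lemma eVec_other {j : ℕ} (hj : j < k) {i : Fin k} (hi : i ≠ ⟨j, hj⟩) : eVec k j i = 0 := by
  unfold eVec; rw [dif_pos hj]; exact Pi.single_eq_of_ne hi 1

/-- The key combinatorial identity: differencing the partial box with step `l • e_j`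
equals differencing the next partial box with unit step. -/
lemma step_identity (hk : 2 ≤ k) {l j : ℕ} (hj : j < k - 1) :
    dOp (l • eVec k j) (Cfun n k l j) = dOp (eVec k j) (Cfun n k l (j + 1)) := by
  have hjk : j < k := by omega
  set fj : Fin k := ⟨j, hjk⟩ with hfj
  have hfv : (fj : ℕ) = j := rfl
  funext x
  have hco1 : ∀ i, i ≠ fj → (x + l • eVec k j) i = x i := by
    intro i hi; simp [eVec_other hjk hi]
  have hco2 : ∀ i, i ≠ fj → (x + eVec k j) i = x i := by
    intro i hi; simp [eVec_other hjk hi]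
  have hcj1 : (x + l • eVec k j) fj = x fj + l := by
    simp [hfj, eVec_self hjk]
  have hcj2 : (x + eVec k j) fj = x fj + 1 := by
    simp [hfj, eVec_self hjk]
  simp only [dOp_apply]
  by_cases hQ : ∀ i : Fin k, i ≠ fj → (if ((i : ℕ) < j ∨ (i : ℕ) = k - 1)
      then (-(l : ℤ) < x i ∧ x i ≤ 0) else x i = 0)
  · -- all other coordinates are fine; reduce to the scalar identity at coordinate j
    have hiff : ∀ (y : Fin k → ℤ), (∀ i, i ≠ fj → y i = x i) →
        ((∀ i : Fin k, if ((i : ℕ) < j ∨ (i : ℕ) = k - 1)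
          then (-(l : ℤ) < y i ∧ y i ≤ 0) else y i = 0) ↔ y fj = 0) := by
      intro y hy
      constructor
      · intro h
        have := h fj
        rw [if_neg (by rw [hfv]; omega : ¬((fj : ℕ) < j ∨ (fj : ℕ) = k - 1))] at this
        exact this
      · intro h i
        by_cases hi : i = fj
        · subst hi
          rw [if_neg (by rw [hfv]; omega : ¬((fj : ℕ) < j ∨ (fj : ℕ) = k - 1))]
          exact h
        · rw [hy i hi]; exact hQ i hi
    have hiff' : ∀ (y : Fin k → ℤ), (∀ i, i ≠ fj → y i = x i) →
        ((∀ i : Fin k, if ((i : ℕ) < j + 1 ∨ (i : ℕ) = k - 1)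
          then (-(l : ℤ) < y i ∧ y i ≤ 0) else y i = 0) ↔
          (-(l : ℤ) < y fj ∧ y fj ≤ 0)) := by
      intro y hy
      constructor
      · intro h
        have := h fj
        rw [if_pos (by rw [hfv]; omega : ((fj : ℕ) < j + 1 ∨ (fj : ℕ) = k - 1))] at this
        exact this
      · intro h i
        by_cases hi : i = fj
        · subst hi
          rw [if_pos (by rw [hfv]; omega : ((fj : ℕ) < j + 1 ∨ (fj : ℕ) = k - 1))]
          exact h
        · have hieq : ((i : ℕ) < j + 1 ∨ (i : ℕ) = k - 1) ↔ ((i : ℕ) < j ∨ (i : ℕ) = k - 1) := by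
            have : (i : ℕ) ≠ j := fun hc => hi (Fin.ext hc)
            omega
          rw [if_congr hieq rfl rfl, hy i hi]
          exact hQ i hi
    rw [show Cfun n k l j x = if x fj = 0 then (1 : ZMod n) else 0 from
        indicator_congr (hiff x (fun _ _ => rfl)),
      show Cfun n k l j (x + l • eVec k j) = if x fj + l = 0 then (1 : ZMod n) else 0 by
        rw [show Cfun n k l j (x + l • eVec k j) =
            if (x + l • eVec k j) fj = 0 then (1 : ZMod n) else 0 from
          indicator_congr (hiff _ hco1), hcj1],
      show Cfun n k l (j + 1) x = if (-(l : ℤ) < x fj ∧ x fj ≤ 0) then (1 : ZMod n) else 0 from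
        indicator_congr (hiff' x (fun _ _ => rfl)),
      show Cfun n k l (j + 1) (x + eVec k j) =
          if (-(l : ℤ) < x fj + 1 ∧ x fj + 1 ≤ 0) then (1 : ZMod n) else 0 by
        rw [show Cfun n k l (j + 1) (x + eVec k j) =
            if (-(l : ℤ) < (x + eVec k j) fj ∧ (x + eVec k j) fj ≤ 0)
              then (1 : ZMod n) else 0 from
          indicator_congr (hiff' _ hco2), hcj2]]
    exact scalar_step l (x fj)
  · -- some other coordinate fails; everything vanishes
    push_neg at hQ
    obtain ⟨i, hi, hbad⟩ := hQ
    have hbad' : ¬ (if ((i : ℕ) < j + 1 ∨ (i : ℕ) = k - 1)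
        then (-(l : ℤ) < x i ∧ x i ≤ 0) else x i = 0) := by
      have hieq : ((i : ℕ) < j + 1 ∨ (i : ℕ) = k - 1) ↔ ((i : ℕ) < j ∨ (i : ℕ) = k - 1) := by
        have : (i : ℕ) ≠ j := fun hc => hi (Fin.ext hc)
        omega
      rw [if_congr hieq rfl rfl]
      exact hbad
    have z1 : Cfun n k l j x = 0 := if_neg (fun h => hbad (h i))
    have z2 : Cfun n k l j (x + l • eVec k j) = 0 := by
      refine if_neg (fun h => hbad ?_)
      have := h i
      rwa [hco1 i hi] at this
    have z3 : Cfun n k l (j + 1) x = 0 := if_neg (fun h => hbad' (h i))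
    have z4 : Cfun n k l (j + 1) (x + eVec k j) = 0 := by
      refine if_neg (fun h => hbad' ?_)
      have := h i
      rwa [hco2 i hi] at this
    rw [z1, z2, z3, z4]

/-! ### The test elements -/

/-- The "column" element `(a b_k)^m b_k^{-m}`, whose base function is a length-`m`
column in the last coordinate direction. -/
noncomputable def AvAux (n k m : ℕ) : ZnWrZk n k :=
  (a5 n k * b5' n k (k - 1)) ^ m * ((b5' n k (k - 1))⁻¹) ^ m

lemma rt_a5 : rt (a5 n k) = 0 := rfl

lemma rt_AvAux (m : ℕ) : rt (AvAux n k m) = 0 := by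
  unfold AvAux
  rw [rt_mul, rt_pow, rt_pow, rt_mul, rt_inv, rt_a5, zero_add, smul_neg]
  abel

lemma AvAux_succ (m : ℕ) :
    AvAux n k (m + 1) =
      AvAux n k m * ((b5' n k (k - 1)) ^ m * a5 n k * ((b5' n k (k - 1)) ^ m)⁻¹) := by
  unfold AvAux
  rw [pow_succ, pow_succ' ((b5' n k (k - 1))⁻¹) m, inv_pow]
  group

lemma bf_AvAux (hk : 2 ≤ k) (m : ℕ) : bf (AvAux n k m) = Cfun n k m 0 := by
  have hk1 : k - 1 < k := by omega
  set lastI : Fin k := ⟨k - 1, hk1⟩ with hlastI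
  have hlv : (lastI : ℕ) = k - 1 := rfl
  induction m with
  | zero =>
    have h1 : AvAux n k 0 = 1 := by simp [AvAux]
    rw [h1, bf_one]
    funext x
    refine (if_neg fun h => ?_).symm
    have := h lastI
    rw [if_pos (by rw [hlv]; omega : ((lastI : ℕ) < 0 ∨ (lastI : ℕ) = k - 1))] at this
    push_cast at this
    omega
  | succ m ih =>
    rw [AvAux_succ, bf_mul, ih, rt_AvAux, b5'_pow, bf_conj_inr, bf_a5]
    funext x
    rw [add_zero, toAdd_ofAdd]
    simp only [sh_apply]
    have hco : ∀ i, i ≠ lastI → (m • eVec k (k - 1)) i = 0 := by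
      intro i hi; simp [eVec_other hk1 hi]
    have hcj : (m • eVec k (k - 1)) lastI = (m : ℤ) := by
      simp [hlastI, eVec_self hk1]
    by_cases hQ : ∀ i, i ≠ lastI → x i = 0
    · have iff1 : ∀ (p : ℕ), ((∀ i : Fin k, if ((i : ℕ) < 0 ∨ (i : ℕ) = k - 1)
          then (-(p : ℤ) < x i ∧ x i ≤ 0) else x i = 0) ↔
          (-(p : ℤ) < x lastI ∧ x lastI ≤ 0)) := by
        intro p
        constructor
        · intro h
          have := h lastI
          rwa [if_pos (by rw [hlv]; omega : ((lastI : ℕ) < 0 ∨ (lastI : ℕ) = k - 1))] at this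
        · intro h i
          by_cases hi : i = lastI
          · subst hi
            rwa [if_pos (by rw [hlv]; omega : ((lastI : ℕ) < 0 ∨ (lastI : ℕ) = k - 1))]
          · rw [if_neg, hQ i hi]
            intro hc
            rcases hc with hc | hc
            · omega
            · exact hi (Fin.ext (by rw [hlv, hc]))
      have iff2 : (x + m • eVec k (k - 1) = 0) ↔ x lastI = -(m : ℤ) := by
        constructor
        · intro h
          have := congrFun h lastI
          rw [Pi.add_apply, hcj, Pi.zero_apply] at this
          omega
        · intro h
          funext i
          by_cases hi : i = lastI
          · subst hi
            rw [Pi.add_apply, hcj, Pi.zero_apply, h]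
            omega
          · rw [Pi.add_apply, hco i hi, hQ i hi, Pi.zero_apply, add_zero]
      rw [show Cfun n k m 0 x = if (-(m : ℤ) < x lastI ∧ x lastI ≤ 0) then (1 : ZMod n) else 0
          from indicator_congr (iff1 m),
        show (if x + m • eVec k (k - 1) = 0 then (1 : ZMod n) else 0) =
            if x lastI = -(m : ℤ) then (1 : ZMod n) else 0 from indicator_congr iff2,
        show Cfun n k (m + 1) 0 x =
            if (-(((m + 1 : ℕ)) : ℤ) < x lastI ∧ x lastI ≤ 0) then (1 : ZMod n) else 0
          from indicator_congr (iff1 (m + 1))]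
      exact scalar_base m (x lastI)
    · push_neg at hQ
      obtain ⟨i, hi, hxi⟩ := hQ
      have hcond : ∀ (p : ℕ), ¬ (∀ i : Fin k, if ((i : ℕ) < 0 ∨ (i : ℕ) = k - 1)
          then (-(p : ℤ) < x i ∧ x i ≤ 0) else x i = 0) := by
        intro p h
        have := h i
        rw [if_neg] at this
        · exact hxi this
        · intro hc
          rcases hc with hc | hc
          · omega
          · exact hi (Fin.ext (by rw [hlv, hc]))
      have z1 : Cfun n k m 0 x = 0 := if_neg (hcond m)
      have z2 : (if x + m • eVec k (k - 1) = 0 then (1 : ZMod n) else 0) = 0 := by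
        refine if_neg fun h => ?_
        have := congrFun h i
        rw [Pi.add_apply, hco i hi, Pi.zero_apply, add_zero] at this
        exact hxi this
      have z3 : Cfun n k (m + 1) 0 x = 0 := if_neg (hcond (m + 1))
      rw [z1, z2, z3, add_zero]

/-- The test elements: iterated commutators of the column with powers of the generators. -/
noncomputable def vl (n k l : ℕ) : ℕ → ZnWrZk n k
  | 0 => AvAux n k l
  | j + 1 => ⁅vl n k l j, (b5' n k j) ^ l⁆

lemma rt_vl (l j : ℕ) : rt (vl n k l j) = 0 := by
  cases j with
  | zero => exact rt_AvAux l
  | succ j => exact rt_commutator _ _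

lemma bf_vl (hk : 2 ≤ k) (l : ℕ) : ∀ j ≤ k - 1,
    bf (vl n k l j) = dList (esL k j) (Cfun n k l j) := by
  intro j
  induction j with
  | zero => intro _; exact bf_AvAux hk l
  | succ j ih =>
    intro hj
    have hj' : j < k - 1 := by omega
    show bf ⁅vl n k l j, (b5' n k j) ^ l⁆ = _
    rw [b5'_pow, bf_commutator_inr _ _ (rt_vl l j), toAdd_ofAdd, ih (by omega),
      ← dList_dOp, step_identity hk hj', dList_dOp]
    rfl

/-! ### Upper bounds on word length -/

/-- `g` is a product of at most `m` elements of `T ∪ T⁻¹`. -/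
def PWord {G : Type*} [Group G] (T : Set G) (g : G) (m : ℕ) : Prop :=
  ∃ L : List G, (∀ x ∈ L, x ∈ T ∪ T⁻¹) ∧ L.prod = g ∧ L.length ≤ m

lemma wordLength_le_of_PWord {G : Type*} [Group G] {T : Set G} {g : G} {m : ℕ}
    (h : PWord T g m) : wordLength T g ≤ m := by
  obtain ⟨L, hmem, hprod, hlen⟩ := h
  refine le_trans (Nat.sInf_le ?_) hlen
  exact ⟨L.get, fun i => hmem _ (L.get_mem i), by rw [List.ofFn_get]; exact hprod⟩

lemma PWord.mono {G : Type*} [Group G] {T : Set G} {g : G} {m m' : ℕ}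
    (h : PWord T g m) (hm : m ≤ m') : PWord T g m' := by
  obtain ⟨L, h1, h2, h3⟩ := h
  exact ⟨L, h1, h2, le_trans h3 hm⟩

lemma PWord.one {G : Type*} [Group G] (T : Set G) : PWord T (1 : G) 0 :=
  ⟨[], by simp, by simp, by simp⟩

lemma PWord.of_mem {G : Type*} [Group G] {T : Set G} {g : G} (h : g ∈ T) : PWord T g 1 :=
  ⟨[g], by simp [Set.mem_union]; exact Or.inl h, by simp, by simp⟩

lemma PWord.mul {G : Type*} [Group G] {T : Set G} {g h : G} {m m' : ℕ}
    (hg : PWord T g m) (hh : PWord T h m') : PWord T (g * h) (m + m') := by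
  obtain ⟨L, h1, h2, h3⟩ := hg
  obtain ⟨L', h1', h2', h3'⟩ := hh
  exact ⟨L ++ L', by
    intro x hx
    rcases List.mem_append.mp hx with hx | hx
    exacts [h1 x hx, h1' x hx], by rw [List.prod_append, h2, h2'], by
    rw [List.length_append]; omega⟩

lemma PWord.inv {G : Type*} [Group G] {T : Set G} {g : G} {m : ℕ}
    (hg : PWord T g m) : PWord T g⁻¹ m := by
  obtain ⟨L, h1, h2, h3⟩ := hg
  refine ⟨(L.map (·⁻¹)).reverse, ?_, ?_, by simp [h3]⟩
  · intro x hx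
    rw [List.mem_reverse, List.mem_map] at hx
    obtain ⟨y, hy, rfl⟩ := hx
    rcases h1 y hy with h | h
    · exact Or.inr (by simpa using h)
    · exact Or.inl (by simpa [Set.mem_inv] using h)
  · rw [← List.prod_inv_reverse, h2]

lemma PWord.pow {G : Type*} [Group G] {T : Set G} {g : G} {m : ℕ}
    (hg : PWord T g m) (e : ℕ) : PWord T (g ^ e) (e * m) := by
  induction e with
  | zero => simpa using PWord.one T
  | succ e ih =>
    rw [pow_succ]
    exact (ih.mul hg).mono (by ring_nf; omega)

lemma PWord.commutator {G : Type*} [Group G] {T : Set G} {g h : G} {m m' : ℕ}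
    (hg : PWord T g m) (hh : PWord T h m') : PWord T ⁅g, h⁆ (2 * m + 2 * m') := by
  have := ((hg.mul hh).mul hg.inv).mul hh.inv
  rw [commutatorElement_def]
  exact this.mono (by omega)

/-- The standard generating set of the ambient wreath product. -/
def Tgen (n k : ℕ) : Set (ZnWrZk n k) := {a5 n k} ∪ Set.range (b5 n k)

lemma PWord_b5' (j : ℕ) : PWord (Tgen n k) (b5' n k j) 1 := by
  unfold b5'
  split
  · exact PWord.of_mem (Or.inr ⟨_, rfl⟩)
  · exact (PWord.one _).mono (by omega)

lemma PWord_a5 : PWord (Tgen n k) (a5 n k) 1 := PWord.of_mem (Or.inl rfl)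

lemma PWord_AvAux (l : ℕ) : PWord (Tgen n k) (AvAux n k l) (3 * l) := by
  have h1 : PWord (Tgen n k) ((a5 n k * b5' n k (k - 1)) ^ l) (l * 2) :=
    (PWord_a5.mul (PWord_b5' (k - 1))).pow l
  have h2 : PWord (Tgen n k) (((b5' n k (k - 1))⁻¹) ^ l) (l * 1) :=
    ((PWord_b5' (k - 1)).inv).pow l
  exact (h1.mul h2).mono (by omega)

lemma PWord_vl (l : ℕ) : ∀ j, PWord (Tgen n k) (vl n k l j) (5 * 3 ^ j * l) := by
  intro j
  induction j with
  | zero => exact (PWord_AvAux l).mono (by omega)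
  | succ j ih =>
    have hb : PWord (Tgen n k) ((b5' n k j) ^ l) (l * 1) := (PWord_b5' j).pow l
    show PWord (Tgen n k) ⁅vl n k l j, (b5' n k j) ^ l⁆ _
    refine (ih.commutator hb).mono ?_
    have h1 : 1 ≤ 3 ^ j := Nat.one_le_pow j 3 (by norm_num)
    calc 2 * (5 * 3 ^ j * l) + 2 * (l * 1) ≤ 5 * (3 ^ j * 3) * l := by nlinarith
      _ = 5 * 3 ^ (j + 1) * l := by ring

/-! ### The subgroup and the counting invariant -/

/-- The distorted subgroup `H`. -/
noncomputable def Hsub (n k : ℕ) : Subgroup (ZnWrZk n k) :=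
  Subgroup.closure ({w5 n k (k - 1)} ∪ Set.range (b5 n k))

/-- The invariant: `g` has base function `D C` for a function `C` of total `val`-weight
at most `N` (supported in `s`). -/
def Qinv (n k : ℕ) (N : ℕ) (g : ZnWrZk n k) : Prop :=
  ∃ (C : (Fin k → ℤ) → ZMod n) (s : Finset (Fin k → ℤ)),
    (∀ x ∉ s, C x = 0) ∧ bf g = dList (esL k (k - 1)) C ∧ (∑ x ∈ s, (C x).val) ≤ N

lemma Qinv.mono {N N' : ℕ} {g : ZnWrZk n k} (h : Qinv n k N g) (hN : N ≤ N') :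
    Qinv n k N' g := by
  obtain ⟨C, s, h1, h2, h3⟩ := h
  exact ⟨C, s, h1, h2, le_trans h3 hN⟩

lemma Qinv_one : Qinv n k 0 (1 : ZnWrZk n k) :=
  ⟨0, ∅, fun _ _ => rfl, by rw [bf_one, dList_zero], by simp⟩

lemma Qinv_mul {N N' : ℕ} {g h : ZnWrZk n k} (hg : Qinv n k N g) (hh : Qinv n k N' h) :
    Qinv n k (N + N') (g * h) := by
  classical
  obtain ⟨C₁, s₁, hs₁, hb₁, hw₁⟩ := hg
  obtain ⟨C₂, s₂, hs₂, hb₂, hw₂⟩ := hh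
  refine ⟨C₁ + sh (rt g) C₂, s₁ ∪ s₂.image (fun y => y + (- rt g)), ?_, ?_, ?_⟩
  · intro x hx
    simp only [Finset.mem_union, Finset.mem_image, not_or, not_exists] at hx
    have hx2 : (x + rt g) ∉ s₂ := by
      intro hc
      exact hx.2 (x + rt g) ⟨hc, by abel⟩
    simp [sh_apply, hs₁ x hx.1, hs₂ _ hx2]
  · rw [bf_mul, hb₁, hb₂, dList_add, dList_sh]
    rfl
  · calc ∑ x ∈ s₁ ∪ s₂.image (fun y => y + (- rt g)), ((C₁ + sh (rt g) C₂) x).val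
        ≤ ∑ x ∈ s₁ ∪ s₂.image (fun y => y + (- rt g)),
            ((C₁ x).val + (C₂ (x + rt g)).val) := by
          refine Finset.sum_le_sum fun x _ => ?_
          exact ZMod.val_add_le _ _
      _ = (∑ x ∈ s₁ ∪ s₂.image (fun y => y + (- rt g)), (C₁ x).val) +
            (∑ x ∈ s₁ ∪ s₂.image (fun y => y + (- rt g)), (C₂ (x + rt g)).val) :=
          Finset.sum_add_distrib
      _ ≤ N + N' := by
          gcongr
          · calc ∑ x ∈ s₁ ∪ s₂.image (fun y => y + (- rt g)), (C₁ x).val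
                = ∑ x ∈ s₁, (C₁ x).val := by
                  refine (Finset.sum_subset Finset.subset_union_left ?_).symm
                  intro x _ hx
                  rw [hs₁ x hx, ZMod.val_zero]
              _ ≤ N := hw₁
          · calc ∑ x ∈ s₁ ∪ s₂.image (fun y => y + (- rt g)), (C₂ (x + rt g)).val
                = ∑ x ∈ s₂.image (fun y => y + (- rt g)), (C₂ (x + rt g)).val := by
                  refine (Finset.sum_subset Finset.subset_union_right ?_).symm
                  intro x _ hx
                  have : (x + rt g) ∉ s₂ := by
                    intro hc
                    refine hx ?_
                    refine Finset.mem_image.mpr ⟨x + rt g, hc, by abel⟩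
                  rw [hs₂ _ this, ZMod.val_zero]
              _ = ∑ y ∈ s₂, (C₂ (y + (- rt g) + rt g)).val := by
                  refine Finset.sum_image fun y _ y' _ h => by
                    have := congrArg (fun z => z + rt g) h
                    simpa [add_assoc] using this
              _ ≤ N' := by
                  refine le_trans (le_of_eq (Finset.sum_congr rfl fun y _ => ?_)) hw₂
                  have hy : y + (- rt g) + rt g = y := by abel
                  rw [hy]
  
lemma val_neg_le (hn : 2 ≤ n) (c : ZMod n) : (-c).val ≤ (n - 1) * c.val := by
  haveI : NeZero n := ⟨by omega⟩
  by_cases hc : c = 0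
  · simp [hc]
  · have h1 : (-c).val < n := ZMod.val_lt _
    have h2 : 1 ≤ c.val := by
      rcases Nat.eq_zero_or_pos (c.val) with h | h
      · exact absurd ((ZMod.val_eq_zero c).mp h) hc
      · exact h
    calc (-c).val ≤ n - 1 := by omega
      _ ≤ (n - 1) * c.val := Nat.le_mul_of_pos_right _ (by omega)

lemma Qinv_inv (hn : 2 ≤ n) {N : ℕ} {g : ZnWrZk n k} (hg : Qinv n k N g) :
    Qinv n k ((n - 1) * N) g⁻¹ := by
  classical
  obtain ⟨C, s, hs, hb, hw⟩ := hg
  refine ⟨- sh (- rt g) C, s.image (fun y => y + rt g), ?_, ?_, ?_⟩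
  · intro x hx
    have : (x + - rt g) ∉ s := by
      intro hc
      exact hx (Finset.mem_image.mpr ⟨x + - rt g, hc, by abel⟩)
    simp [sh_apply, hs _ this]
  · rw [bf_inv, hb, dList_neg, dList_sh]
    rfl
  · calc ∑ x ∈ s.image (fun y => y + rt g), ((- sh (- rt g) C) x).val
        = ∑ y ∈ s, ((- sh (- rt g) C) (y + rt g)).val := by
          refine Finset.sum_image fun y _ y' _ h => by
            have := congrArg (fun z => z + (- rt g)) h
            simpa [add_assoc] using this
      _ = ∑ y ∈ s, ((- C y)).val := by
          refine Finset.sum_congr rfl fun y _ => ?_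
          have hy : y + rt g + - rt g = y := by abel
          simp only [Pi.neg_apply, sh_apply, hy]
      _ ≤ ∑ y ∈ s, (n - 1) * (C y).val := Finset.sum_le_sum fun y _ => val_neg_le hn _
      _ = (n - 1) * ∑ y ∈ s, (C y).val := by rw [Finset.mul_sum]
      _ ≤ (n - 1) * N := Nat.mul_le_mul_left _ hw

lemma Qinv_w5 (hn : 2 ≤ n) : Qinv n k 1 (w5 n k (k - 1)) := by
  refine ⟨delta0 n k, {0}, ?_, bf_w5 (k - 1), ?_⟩
  · intro x hx
    simp only [Finset.mem_singleton] at hx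
    exact if_neg hx
  · haveI : Fact (1 < n) := ⟨by omega⟩
    simp [delta0, ZMod.val_one]

lemma Qinv_b5 (i : Fin k) : Qinv n k 0 (b5 n k i) :=
  ⟨0, ∅, fun _ _ => rfl, by rw [show b5 n k i = SemidirectProduct.inr _ from rfl, bf_inr,
    dList_zero], by simp⟩

lemma Qinv_exists (hn : 2 ≤ n) {g : ZnWrZk n k} (hg : g ∈ Hsub n k) :
    ∃ N, Qinv n k N g := by
  induction hg using Subgroup.closure_induction with
  | mem x hx =>
    rcases hx with hx | hx
    · rw [Set.mem_singleton_iff] at hx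
      exact ⟨1, hx ▸ Qinv_w5 hn⟩
    · obtain ⟨i, rfl⟩ := hx
      exact ⟨0, Qinv_b5 i⟩
  | one => exact ⟨0, Qinv_one⟩
  | mul x y _ _ hx hy =>
    obtain ⟨N, hN⟩ := hx
    obtain ⟨N', hN'⟩ := hy
    exact ⟨N + N', Qinv_mul hN hN'⟩
  | inv x _ hx =>
    obtain ⟨N, hN⟩ := hx
    exact ⟨(n - 1) * N, Qinv_inv hn hN⟩

lemma Qinv_list_prod {M : ℕ} : ∀ L : List ↥(Hsub n k),
    (∀ x ∈ L, Qinv n k M ((x : ↥(Hsub n k)) : ZnWrZk n k)) →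
    Qinv n k (L.length * M) ((L.prod : ↥(Hsub n k)) : ZnWrZk n k) := by
  intro L
  induction L with
  | nil => intro _; simpa using Qinv_one
  | cons x L ih =>
    intro h
    have hx := h x List.mem_cons_self
    have hL := ih fun y hy => h y (List.mem_cons_of_mem x hy)
    rw [List.prod_cons]
    rw [show (((x * L.prod : ↥(Hsub n k))) : ZnWrZk n k) =
      (x : ZnWrZk n k) * ((L.prod : ↥(Hsub n k)) : ZnWrZk n k) from rfl]
    refine (Qinv_mul hx hL).mono (le_of_eq ?_)
    rw [List.length_cons, add_mul, one_mul, add_comm]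

/-! ### The counting lower bound and membership -/

lemma esL_mem {j : ℕ} : ∀ v ∈ esL k j, ∃ j' < j, v = eVec k j' := by
  induction j with
  | zero => intro v hv; simp [esL] at hv
  | succ j ih =>
    intro v hv
    rcases List.mem_cons.mp hv with hv | hv
    · exact ⟨j, by omega, hv⟩
    · obtain ⟨j', hj', rfl⟩ := ih v hv
      exact ⟨j', by omega, rfl⟩

lemma esL_ne_zero (hk : 2 ≤ k) : ∀ v ∈ esL k (k - 1), v ≠ 0 := by
  intro v hv
  obtain ⟨j', hj', rfl⟩ := esL_mem v hv
  exact eVec_ne_zero (by omega)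

lemma supp_Cfun (l j : ℕ) : (Function.support (Cfun n k l j)).Finite := by
  have h : Function.support (Cfun n k l j) ⊆
      Set.pi Set.univ (fun _ : Fin k => Set.Icc (-(l : ℤ)) 0) := by
    intro x hx
    rw [Function.mem_support] at hx
    have hcond : ∀ i : Fin k, if ((i : ℕ) < j ∨ (i : ℕ) = k - 1)
        then (-(l : ℤ) < x i ∧ x i ≤ 0) else x i = 0 := by
      by_contra hc
      exact hx (if_neg hc)
    intro i _
    have := hcond i
    split at this
    · exact ⟨le_of_lt this.1, this.2⟩
    · rw [this]; constructor <;> omega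
  exact (Set.Finite.pi fun _ => Set.finite_Icc _ _).subset h

/-- The box `(-l, 0]^k`. -/
noncomputable def boxF (k l : ℕ) : Finset (Fin k → ℤ) :=
  Fintype.piFinset fun _ : Fin k => Finset.Ioc (-(l : ℤ)) 0

lemma card_boxF (l : ℕ) : (boxF k l).card = l ^ k := by
  rw [boxF, Fintype.card_piFinset]
  have : (Finset.Ioc (-(l : ℤ)) 0).card = l := by
    rw [Int.card_Ioc]
    omega
  simp [this]

lemma Cfun_boxF (hk : 2 ≤ k) {l : ℕ} {x : Fin k → ℤ} (hx : x ∈ boxF k l) :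
    Cfun n k l (k - 1) x = 1 := by
  rw [boxF, Fintype.mem_piFinset] at hx
  refine if_pos fun i => ?_
  have hi := hx i
  rw [Finset.mem_Ioc] at hi
  rw [if_pos (by have := i.isLt; omega : ((i : ℕ) < k - 1 ∨ (i : ℕ) = k - 1))]
  exact hi

lemma Cfun_eq_zero_of_not_mem_boxF (hk : 2 ≤ k) {l : ℕ} {x : Fin k → ℤ}
    (hx : x ∉ boxF k l) : Cfun n k l (k - 1) x = 0 := by
  refine if_neg fun h => hx ?_
  rw [boxF]
  refine Fintype.mem_piFinset.mpr fun i => ?_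
  have hi := h i
  rw [if_pos (by have := i.isLt; omega : ((i : ℕ) < k - 1 ∨ (i : ℕ) = k - 1))] at hi
  exact Finset.mem_Ioc.mpr hi

lemma one_ne_zero' (hn : 2 ≤ n) : (1 : ZMod n) ≠ 0 := by
  haveI : Fact (1 < n) := ⟨by omega⟩
  intro hc
  have := congrArg ZMod.val hc
  rw [ZMod.val_one n, ZMod.val_zero] at this
  omega

/-- The main counting lower bound: any weight certificate for the test element has
weight at least `l^k`. -/
lemma Qinv_lower (hn : 2 ≤ n) (hk : 2 ≤ k) {l N : ℕ}
    (h : Qinv n k N (vl n k l (k - 1))) : l ^ k ≤ N := by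
  obtain ⟨C, s, hs, hb, hw⟩ := h
  rw [bf_vl hk l (k - 1) le_rfl] at hb
  have hCfin : (Function.support C).Finite := by
    refine Set.Finite.subset s.finite_toSet fun x hx => ?_
    rw [Function.mem_support] at hx
    by_contra hc
    exact hx (hs x (by simpa using hc))
  have hC : C = Cfun n k l (k - 1) :=
    dList_inj (esL_ne_zero hk) hCfin (supp_Cfun l (k - 1)) hb.symm
  have hsub : boxF k l ⊆ s := by
    intro x hx
    by_contra hc
    have h0 := hs x hc
    rw [hC, Cfun_boxF hk hx] at h0
    exact one_ne_zero' hn h0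
  haveI : Fact (1 < n) := ⟨by omega⟩
  calc l ^ k = ∑ x ∈ boxF k l, (C x).val := by
        rw [Finset.sum_congr rfl fun x hx => by rw [hC, Cfun_boxF hk hx, ZMod.val_one n]]
        simp [card_boxF]
    _ ≤ ∑ x ∈ s, (C x).val := Finset.sum_le_sum_of_subset hsub
    _ ≤ N := hw

lemma b5_mem : ∀ i : Fin k, b5 n k i ∈ Hsub n k := fun i =>
  Subgroup.subset_closure (Or.inr ⟨i, rfl⟩)

lemma w5_mem : w5 n k (k - 1) ∈ Hsub n k := Subgroup.subset_closure (Or.inl rfl)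

lemma inr_mem (u : Fin k → ℤ) :
    (SemidirectProduct.inr (Multiplicative.ofAdd u) : ZnWrZk n k) ∈ Hsub n k := by
  let K : AddSubgroup (Fin k → ℤ) :=
    { carrier := {u | (SemidirectProduct.inr (Multiplicative.ofAdd u) : ZnWrZk n k) ∈ Hsub n k}
      zero_mem' := by
        show (SemidirectProduct.inr (Multiplicative.ofAdd (0 : Fin k → ℤ)) : ZnWrZk n k) ∈ Hsub n k
        rw [ofAdd_zero, map_one]
        exact one_mem _
      add_mem' := by
        intro a b ha hb
        show (SemidirectProduct.inr (Multiplicative.ofAdd (a + b)) : ZnWrZk n k) ∈ Hsub n k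
        rw [ofAdd_add, map_mul]
        exact mul_mem ha hb
      neg_mem' := by
        intro a ha
        show (SemidirectProduct.inr (Multiplicative.ofAdd (-a)) : ZnWrZk n k) ∈ Hsub n k
        rw [ofAdd_neg, map_inv]
        exact inv_mem ha }
  have : u ∈ K := by
    rw [show u = ∑ i, Pi.single i (u i) from (Finset.univ_sum_single u).symm]
    refine AddSubgroup.sum_mem K fun i _ => ?_
    have h2 : Pi.single i (u i) = (u i) • (Pi.single i (1 : ℤ) : Fin k → ℤ) := by
      funext j
      by_cases hj : j = i
      · subst hj; simp
      · simp [Pi.single_eq_of_ne hj]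
    rw [h2]
    exact AddSubgroup.zsmul_mem K (b5_mem i) _
  exact this

lemma eq_one_of_bf (g : ZnWrZk n k) (hr : rt g = 0) (hb : bf g = 0) : g = 1 := by
  have hright : g.right = 1 := Multiplicative.toAdd.injective hr
  have hleft : g.left = 1 := by
    refine Subtype.ext (funext fun y => ?_)
    have := congrFun hb (Multiplicative.toAdd y)
    have h2 : Multiplicative.toAdd
        ((g.left : Multiplicative (Fin k → ℤ) → Multiplicative (ZMod n)) y) = 0 := this
    exact Multiplicative.toAdd.injective h2
  rw [← SemidirectProduct.inl_left_mul_inr_right g, hright, hleft]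
  simp

lemma bf_pow {g : ZnWrZk n k} (hr : rt g = 0) (m : ℕ) :
    bf (g ^ m) = fun x => (m : ZMod n) * bf g x := by
  induction m with
  | zero => funext x; simp [bf_one]
  | succ m ih =>
    rw [pow_succ, bf_mul, ih, rt_pow, hr, smul_zero]
    funext x
    rw [add_zero]
    push_cast
    ring

lemma dOp_mulconst (v : Fin k → ℤ) (c : ZMod n) (u : (Fin k → ℤ) → ZMod n) :
    dOp v (fun x => c * u x) = fun x => c * dOp v u x := by
  funext x
  simp only [dOp_apply]
  ring

lemma dList_mulconst (L : List (Fin k → ℤ)) (c : ZMod n) (u : (Fin k → ℤ) → ZMod n) :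
    dList L (fun x => c * u x) = fun x => c * dList L u x := by
  induction L with
  | nil => rfl
  | cons v L ih => rw [dList_cons, ih, dOp_mulconst]; rfl

lemma mem_of_bf (hn : 2 ≤ n) :
    ∀ (s : Finset (Fin k → ℤ)) (C : (Fin k → ℤ) → ZMod n) (g : ZnWrZk n k), rt g = 0 →
    (∀ x ∉ s, C x = 0) → bf g = dList (esL k (k - 1)) C → g ∈ Hsub n k := by
  classical
  haveI : NeZero n := ⟨by omega⟩
  intro s
  induction s using Finset.induction_on with
  | empty =>
    intro C g hr hs hb
    have hC : C = 0 := funext fun x => hs x (Finset.notMem_empty x)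
    rw [hC, dList_zero] at hb
    rw [eq_one_of_bf g hr hb]
    exact one_mem _
  | @insert a s ha ih =>
    intro C g hr hs hb
    set m := (C a).val with hm
    set X := SemidirectProduct.inr (Multiplicative.ofAdd (-a)) * (w5 n k (k - 1)) ^ m *
      (SemidirectProduct.inr (Multiplicative.ofAdd (-a)) : ZnWrZk n k)⁻¹ with hX
    have hrX : rt X = 0 := by
      rw [hX, rt_conj, rt_pow, rt_w5, smul_zero]
    have hspike : ∀ x, (C a) * (delta0 n k (x + -a)) = if x = a then C a else 0 := by
      intro x
      by_cases hxa : x = a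
      · subst hxa
        rw [show delta0 n k (x + -x) = 1 from by simp [delta0], mul_one, if_pos rfl]
      · rw [show delta0 n k (x + -a) = 0 from if_neg (fun hc => hxa (by
          have := congrArg (fun z => z + a) hc
          simpa [add_assoc] using this)), mul_zero, if_neg hxa]
    have hcast : ((m : ZMod n)) = C a := by
      rw [hm, ZMod.natCast_val, ZMod.cast_id]
    have hbX : bf X = dList (esL k (k - 1)) (fun x => if x = a then C a else 0) := by
      have h1 : bf X = sh (-a) (bf ((w5 n k (k - 1)) ^ m)) := by
        rw [hX, bf_conj_inr]
        rfl
      have h2 : (fun x => if x = a then C a else 0) =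
          fun x => (m : ZMod n) * sh (-a) (delta0 n k) x := by
        funext x
        rw [sh_apply, hcast]
        exact (hspike x).symm
      rw [h1, bf_pow (rt_w5 (k - 1)) m, bf_w5, h2, dList_mulconst, dList_sh]
      rfl
    have hC' : ∀ x ∉ s, (C - fun x => if x = a then C a else 0) x = 0 := by
      intro x hx
      by_cases hxa : x = a
      · subst hxa; simp
      · have : C x = 0 := hs x (by simp [hxa, hx])
        simp [this, hxa]
    have hg' : bf (g * X⁻¹) = dList (esL k (k - 1))
        (C - fun x => if x = a then C a else 0) := by
      rw [bf_mul, bf_inv, hrX, dList_sub, hb, hbX]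
      funext x
      simp [hr, sub_eq_add_neg]
    have hmem' : g * X⁻¹ ∈ Hsub n k := ih _ _ (by rw [rt_mul, rt_inv, hr, hrX]; simp) hC' hg'
    have hXmem : X ∈ Hsub n k := by
      refine mul_mem (mul_mem (inr_mem (-a)) (pow_mem w5_mem m)) (inv_mem (inr_mem (-a)))
    have : g = (g * X⁻¹) * X := by group
    rw [this]
    exact mul_mem hmem' hXmem

lemma vl_mem (hn : 2 ≤ n) (hk : 2 ≤ k) (l : ℕ) : vl n k l (k - 1) ∈ Hsub n k := by
  refine mem_of_bf hn (boxF k l) (Cfun n k l (k - 1)) _ (rt_vl l (k - 1))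
    (fun x hx => Cfun_eq_zero_of_not_mem_boxF hk hx) (bf_vl hk l (k - 1) le_rfl)

lemma w5_mem_closureT : ∀ j, w5 n k j ∈ Subgroup.closure (Tgen n k) := by
  intro j
  induction j with
  | zero => exact Subgroup.subset_closure (Or.inl rfl)
  | succ j ih =>
    have hb : b5' n k j ∈ Subgroup.closure (Tgen n k) := by
      unfold b5'
      split
      · exact Subgroup.subset_closure (Or.inr ⟨_, rfl⟩)
      · exact one_mem _
    exact mul_mem (mul_mem (mul_mem ih hb) (inv_mem ih)) (inv_mem hb)

lemma Hsub_le_closureT : Hsub n k ≤ Subgroup.closure (Tgen n k) := by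
  rw [Hsub, Subgroup.closure_le]
  rintro x (hx | hx)
  · rw [Set.mem_singleton_iff] at hx
    subst hx
    exact w5_mem_closureT (k - 1)
  · obtain ⟨i, rfl⟩ := hx
    exact Subgroup.subset_closure (Or.inr ⟨i, rfl⟩)

/-! ### Glue: finiteness of balls and nonemptiness of word sets -/

lemma wordSet_nonempty {G : Type*} [Group G] {T : Set G} {g : G}
    (hg : g ∈ Subgroup.closure T) :
    {m | ∃ f : Fin m → G, (∀ i, f i ∈ T ∪ T⁻¹) ∧ (List.ofFn f).prod = g}.Nonempty := by
  have h1 : g ∈ Submonoid.closure (T ∪ T⁻¹) := by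
    rw [← Subgroup.closure_toSubmonoid]
    exact hg
  obtain ⟨L, hLmem, hLprod⟩ := Submonoid.exists_list_of_mem_closure h1
  exact ⟨L.length, L.get, fun i => hLmem _ (L.get_mem i),
    by rw [List.ofFn_get]; exact hLprod⟩

lemma ball_finite {G : Type*} [Group G] {T : Set G} (hT : T.Finite) (R : ℕ) :
    {g : G | wordLength T g ≤ R ∧ g ∈ Subgroup.closure T}.Finite := by
  classical
  have hbig : (⋃ m ∈ Set.Iic R, (fun v : Fin m → G => (List.ofFn v).prod) ''
      {v | ∀ i, v i ∈ T ∪ T⁻¹}).Finite := by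
    refine Set.Finite.biUnion (Set.finite_Iic R) fun m _ => Set.Finite.image _ ?_
    have h2 : {v : Fin m → G | ∀ i, v i ∈ T ∪ T⁻¹} =
        Set.pi Set.univ (fun _ : Fin m => T ∪ T⁻¹) := by
      ext v
      simp [Set.mem_pi]
    rw [h2]
    exact Set.Finite.pi fun _ => hT.union hT.inv
  refine hbig.subset ?_
  rintro g ⟨hgR, hgcl⟩
  obtain ⟨f, hf, hprod⟩ := Nat.sInf_mem (wordSet_nonempty hgcl)
  exact Set.mem_biUnion (show wordLength T g ∈ Set.Iic R from hgR) ⟨f, hf, hprod⟩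

lemma exists_uniform_qinv {S : Set ↥(Hsub n k)} (hS : S.Finite) (hn : 2 ≤ n) :
    ∃ M : ℕ, ∀ s ∈ S ∪ S⁻¹, Qinv n k M ((s : ↥(Hsub n k)) : ZnWrZk n k) := by
  classical
  have hfin2 : (S ∪ S⁻¹).Finite := hS.union hS.inv
  set gfun : ↥(Hsub n k) → ℕ := fun s =>
    if h : ∃ N, Qinv n k N ((s : ↥(Hsub n k)) : ZnWrZk n k) then h.choose else 0 with hgfun
  refine ⟨hfin2.toFinset.sup gfun, fun s hs => ?_⟩
  have hex : ∃ N, Qinv n k N ((s : ↥(Hsub n k)) : ZnWrZk n k) := Qinv_exists hn s.2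
  have h1 : Qinv n k (gfun s) ((s : ↥(Hsub n k)) : ZnWrZk n k) := by
    rw [hgfun]
    simp only [dif_pos hex]
    exact hex.choose_spec
  exact h1.mono (Finset.le_sup (hfin2.mem_toFinset.mpr hs))

end S5
/-- For `n ≥ 2`, `k ≥ 2`, the subgroup
`H = ⟨[⋯[[a,b_1],b_2],⋯,b_{k-1}], b_1, …, b_k⟩` of `(ℤ/nℤ) wr ℤ^k` has distortion
`⪰ l^k` (with respect to the generating set `{a, b_1, …, b_k}` of the ambient group). -/
theorem statement5 (n k : ℕ) (hn : 2 ≤ n) (hk : 2 ≤ k) :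
    ∀ S : Set ↥(Subgroup.closure ({w5 n k (k - 1)} ∪ Set.range (b5 n k))),
      S.Finite → Subgroup.closure S = ⊤ →
      Dominates (fun l => l ^ k)
        (distortion ({a5 n k} ∪ Set.range (b5 n k))
          (Subgroup.closure ({w5 n k (k - 1)} ∪ Set.range (b5 n k))) S) := by
  intro S hSfin hSgen
  haveI : NeZero n := ⟨by omega⟩
  -- `S` here is a set in `Hsub n k` (definitionally)
  obtain ⟨M0, hM0⟩ := exists_uniform_qinv (n := n) (k := k) hSfin hn
  set Cst : ℕ := max (5 * 3 ^ (k - 1)) (M0 + 1) with hCst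
  have hCpos : 0 < Cst := lt_of_lt_of_le (by positivity) (le_max_left _ _)
  refine ⟨Cst, hCpos, fun l => ?_⟩
  set gl : ZnWrZk n k := vl n k l (k - 1) with hgl
  have hmem : gl ∈ Hsub n k := vl_mem hn hk l
  set hl : ↥(Hsub n k) := ⟨gl, hmem⟩ with hhl
  -- the test element is short in the ambient group
  have hTlen : wordLength (Tgen n k) gl ≤ Cst * l := by
    refine le_trans (wordLength_le_of_PWord (PWord_vl l (k - 1))) ?_
    exact Nat.mul_le_mul_right _ (le_max_left _ _)
  have hball : hl ∈ {h : ↥(Hsub n k) | wordLength (Tgen n k) (h : ZnWrZk n k) ≤ Cst * l} :=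
    hTlen
  -- the set of word lengths over the ball is bounded above
  have hBdd : BddAbove (wordLength S ''
      {h : ↥(Hsub n k) | wordLength (Tgen n k) (h : ZnWrZk n k) ≤ Cst * l}) := by
    have hTfin : (Tgen n k).Finite := (Set.finite_singleton _).union (Set.finite_range _)
    have hball2 := ball_finite hTfin (Cst * l)
    have hfin : {h : ↥(Hsub n k) | wordLength (Tgen n k) (h : ZnWrZk n k) ≤ Cst * l}.Finite := by
      refine (hball2.preimage
        (Set.injOn_of_injective Subtype.val_injective)).subset ?_
      intro h hh
      exact ⟨hh, Hsub_le_closureT h.2⟩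
    exact (hfin.image _).bddAbove
  have hdist : wordLength S hl ≤
      distortion (Tgen n k) (Hsub n k) S (Cst * l) :=
    le_csSup hBdd ⟨hl, hball, rfl⟩
  -- the test element is long in the subgroup
  have hne : {m | ∃ f : Fin m → ↥(Hsub n k), (∀ i, f i ∈ S ∪ S⁻¹) ∧
      (List.ofFn f).prod = hl}.Nonempty :=
    wordSet_nonempty (by have h := (Subgroup.eq_top_iff' _).mp hSgen hl; exact h)
  obtain ⟨f, hf, hprod⟩ := Nat.sInf_mem hne
  have hQ : Qinv n k ((List.ofFn f).length * M0)
      (((List.ofFn f).prod : ↥(Hsub n k)) : ZnWrZk n k) := by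
    refine Qinv_list_prod _ fun x hx => ?_
    obtain ⟨i, rfl⟩ := List.mem_ofFn.mp hx
    exact hM0 _ (hf i)
  rw [hprod] at hQ
  rw [List.length_ofFn] at hQ
  have hlow : l ^ k ≤ wordLength S hl * M0 := Qinv_lower hn hk hQ
  calc l ^ k ≤ wordLength S hl * M0 := hlow
    _ ≤ distortion (Tgen n k) (Hsub n k) S (Cst * l) * Cst := by
        exact Nat.mul_le_mul hdist (le_trans (Nat.le_succ M0) (le_max_right _ _))
    _ = Cst * distortion (Tgen n k) (Hsub n k) S (Cst * l) := Nat.mul_comm _ _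

end DistortionPaper
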